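/- arXiv:math/0502074 — 2 statements merged into one kernel-verified Lean document; each statement's English description precedes it below -/
import Mathlib

section
/- Let R be a commutative Noetherian ring, M a weakly Laskerian R-module, and N a finitely generated R-module. Then Tor^R_i(N, M) is weakly Laskerian for all i ≥ 0. -/
open CategoryTheory Opposite

universe u

/-- A module is weakly Laskerian if every quotient has finitely many associated primes. -/
def IsWeaklyLaskerian (R : Type u) [CommRing R] (M : Type u) [AddCommGroup M]
    [Module R M] : Prop :=
  ∀ N : Submodule R M, (associatedPrimes R (M ⧸ N)).Finite

section Basic
variable {R : Type u} [CommRing R] {X Y : Type u} [AddCommGroup X] [Module R X]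
  [AddCommGroup Y] [Module R Y]

lemma wl_of_surjective (f : X →ₗ[R] Y) (hf : Function.Surjective f)
    (hX : IsWeaklyLaskerian R X) : IsWeaklyLaskerian R Y := by
  intro K
  have hs : Function.Surjective (K.mkQ ∘ₗ f) :=
    (Submodule.mkQ_surjective K).comp hf
  have e := (LinearMap.ker (K.mkQ ∘ₗ f)).quotEquivOfEq _ rfl
  have e2 := (K.mkQ ∘ₗ f).quotKerEquivOfSurjective hs
  rw [← LinearEquiv.AssociatedPrimes.eq e2]
  exact hX _

lemma assFinite_of_wl (hX : IsWeaklyLaskerian R X) : (associatedPrimes R X).Finite := by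
  have e := Submodule.quotEquivOfEqBot (⊥ : Submodule R X) rfl
  rw [← LinearEquiv.AssociatedPrimes.eq e]
  exact hX ⊥

lemma wl_of_injective (f : X →ₗ[R] Y) (hf : Function.Injective f)
    (hY : IsWeaklyLaskerian R Y) : IsWeaklyLaskerian R X := by
  intro K
  set K' := K.map f
  have hker : LinearMap.ker (K'.mkQ ∘ₗ f) = K := by
    rw [LinearMap.ker_comp, Submodule.ker_mkQ]
    exact Submodule.comap_map_eq_of_injective hf K
  set g : X ⧸ K →ₗ[R] Y ⧸ K' := K.liftQ (K'.mkQ ∘ₗ f) (le_of_eq hker.symm)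
  have hg : Function.Injective g := by
    rw [← LinearMap.ker_eq_bot]
    exact Submodule.ker_liftQ_eq_bot' K _ hker.symm
  exact ((hY K').subset (associatedPrimes.subset_of_injective hg))

lemma wl_congr (e : X ≃ₗ[R] Y) (hX : IsWeaklyLaskerian R X) : IsWeaklyLaskerian R Y :=
  wl_of_surjective e.toLinearMap e.surjective hX

end Basic

section Union
variable {R : Type u} [CommRing R] [IsNoetherianRing R] {B : Type u} [AddCommGroup B] [Module R B]

lemma ass_subset_union (A : Submodule R B) :
    associatedPrimes R B ⊆ associatedPrimes R A ∪ associatedPrimes R (B ⧸ A) := by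
  rintro p hp'
  obtain ⟨hp, x, hx⟩ := isAssociatedPrime_iff.mp hp'
  have hmem : ∀ s : R, s ∈ p ↔ s • x = 0 := fun s => by
    rw [hx, Submodule.mem_colon_singleton, Submodule.mem_bot]
  by_cases hcase : ∃ r : R, r • x ∈ A ∧ r • x ≠ 0
  · obtain ⟨r, hrA, hr0⟩ := hcase
    left
    refine (AssociatedPrimes.mem_iff.trans isAssociatedPrime_iff).mpr ⟨hp, ⟨⟨r • x, hrA⟩, ?_⟩⟩
    have hrp : r ∉ p := fun hrp => hr0 ((hmem r).mp hrp)
    ext s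
    rw [Submodule.mem_colon_singleton, Submodule.mem_bot]
    have : (s • (⟨r • x, hrA⟩ : A) = 0) ↔ (s * r) • x = 0 := by
      rw [Subtype.ext_iff]
      simp [mul_smul]
    rw [this, ← hmem (s * r)]
    constructor
    · intro hs
      exact Ideal.mul_mem_right r p hs
    · intro hs
      rcases hp.mul_mem_iff_mem_or_mem.mp hs with h | h
      · exact h
      · exact absurd h hrp
  · right
    push_neg at hcase
    refine (AssociatedPrimes.mem_iff.trans isAssociatedPrime_iff).mpr ⟨hp, ⟨A.mkQ x, ?_⟩⟩
    ext s
    rw [Submodule.mem_colon_singleton, Submodule.mem_bot, ← map_smul, Submodule.mkQ_apply,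
      Submodule.Quotient.mk_eq_zero]
    rw [hmem s]
    exact ⟨fun h => by rw [h]; exact A.zero_mem, fun h => hcase s h⟩
end Union

section Ext
variable {R : Type u} [CommRing R] [IsNoetherianRing R] {B : Type u} [AddCommGroup B] [Module R B]

lemma wl_ext (A : Submodule R B) (h1 : IsWeaklyLaskerian R A)
    (h2 : IsWeaklyLaskerian R (B ⧸ A)) : IsWeaklyLaskerian R B := by
  intro K
  -- A' : image of A in B ⧸ K
  set A' : Submodule R (B ⧸ K) := A.map K.mkQ with hA'
  have hsub := ass_subset_union A'
  apply Set.Finite.subset _ hsub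
  apply Set.Finite.union
  · -- A' is a quotient of A
    have : Function.Surjective ((K.mkQ ∘ₗ A.subtype).rangeRestrict) :=
      LinearMap.surjective_rangeRestrict _
    have hr : LinearMap.range (K.mkQ ∘ₗ A.subtype) = A' := by
      rw [LinearMap.range_comp, Submodule.range_subtype]
    have hwl : IsWeaklyLaskerian R ↥(LinearMap.range (K.mkQ ∘ₗ A.subtype)) :=
      wl_of_surjective _ this h1
    rw [hr] at hwl
    exact assFinite_of_wl hwl
  · -- (B ⧸ K) ⧸ A' is a quotient of B ⧸ A
    have hle : A ≤ LinearMap.ker (A'.mkQ ∘ₗ K.mkQ) := by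
      intro a ha
      simp only [LinearMap.mem_ker, LinearMap.comp_apply, Submodule.mkQ_apply]
      rw [Submodule.Quotient.mk_eq_zero]
      exact Submodule.mem_map_of_mem ha
    have hsurj : Function.Surjective (A.liftQ (A'.mkQ ∘ₗ K.mkQ) hle) := by
      intro y
      obtain ⟨b, rfl⟩ := (Submodule.mkQ_surjective A').comp (Submodule.mkQ_surjective K) y
      exact ⟨A.mkQ b, rfl⟩
    exact assFinite_of_wl (wl_of_surjective _ hsurj h2)

end Ext

section Prod
variable {R : Type u} [CommRing R] [IsNoetherianRing R] {X Y : Type u} [AddCommGroup X] [Module R X]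
  [AddCommGroup Y] [Module R Y]

lemma wl_prod (hX : IsWeaklyLaskerian R X) (hY : IsWeaklyLaskerian R Y) :
    IsWeaklyLaskerian R (X × Y) := by
  apply wl_ext (LinearMap.ker (LinearMap.snd R X Y))
  · -- A ≃ X
    have hinj : Function.Injective
        ((LinearMap.fst R X Y).comp (LinearMap.ker (LinearMap.snd R X Y)).subtype) := by
      intro a b h
      have ha : a.1.2 = 0 := a.2
      have hb : b.1.2 = 0 := b.2
      apply Subtype.ext
      apply Prod.ext
      · exact h
      · exact ha.trans hb.symm
    exact wl_of_injective _ hinj hX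
  · -- (X × Y) ⧸ A ≃ Y
    have := (LinearMap.snd R X Y).quotKerEquivOfSurjective (fun y => ⟨(0, y), rfl⟩)
    exact wl_congr this.symm hY

lemma wl_pi (n : ℕ) {M : Type u} [AddCommGroup M] [Module R M]
    (hM : IsWeaklyLaskerian R M) : IsWeaklyLaskerian R (Fin n → M) := by
  induction n with
  | zero =>
    intro K
    have : Subsingleton ((Fin 0 → M) ⧸ K) := by
      constructor; intro a b
      obtain ⟨a, rfl⟩ := Submodule.mkQ_surjective K a
      obtain ⟨b, rfl⟩ := Submodule.mkQ_surjective K b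
      congr 1
      ext i
      exact absurd i.2 (Nat.not_lt_zero i.1)
    rw [associatedPrimes.eq_empty_of_subsingleton]
    exact Set.finite_empty
  | succ n ih =>
    have e : (M × (Fin n → M)) ≃ₗ[R] (Fin (n + 1) → M) :=
      { toFun := fun p => Fin.cons p.1 p.2
        map_add' := by intro a b; ext i; induction i using Fin.cases <;> simp
        map_smul' := by intro r a; ext i; induction i using Fin.cases <;> simp
        invFun := fun f => (f 0, fun i => f i.succ)
        left_inv := by rintro ⟨a, f⟩; simp
        right_inv := by intro f; ext i; induction i using Fin.cases <;> simp }
    exact wl_congr e (wl_prod hM ih)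

end Prod

section Tensor
variable {R : Type u} [CommRing R] [IsNoetherianRing R] {M N : Type u} [AddCommGroup M] [Module R M]
  [AddCommGroup N] [Module R N]

open TensorProduct in
lemma wl_tensor (hM : IsWeaklyLaskerian R M) [Module.Finite R N] :
    IsWeaklyLaskerian R (N ⊗[R] M) := by
  obtain ⟨n, f, hf⟩ := Module.Finite.exists_fin' R N
  have hsurj : Function.Surjective (LinearMap.rTensor M f) :=
    LinearMap.rTensor_surjective M hf
  have e : ((Fin n → R) ⊗[R] M) ≃ₗ[R] (Fin n → M) :=
    (TensorProduct.comm R _ M).trans <|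
      (TensorProduct.piRight R R _ (fun _ : Fin n => R)).trans <|
        LinearEquiv.piCongrRight (fun _ => TensorProduct.rid R M)
  exact wl_of_surjective _ hsurj (wl_congr e.symm (wl_pi n hM))

end Tensor

section Cat
open CategoryTheory CategoryTheory.Limits CategoryTheory.MonoidalCategory

variable {R : Type u} [CommRing R] [IsNoetherianRing R]

lemma wl_iso {X Y : ModuleCat.{u} R} (e : X ≅ Y) (h : IsWeaklyLaskerian R X) :
    IsWeaklyLaskerian R Y :=
  wl_congr e.toLinearEquiv h

lemma tor_aux {M : Type u} [AddCommGroup M] [Module R M]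
    (hM : IsWeaklyLaskerian R M) (i : ℕ) :
    ∀ (N : Type u) [AddCommGroup N] [Module R N], Module.Finite R N →
      IsWeaklyLaskerian R
        ((((tensoringLeft (ModuleCat.{u} R)).obj (ModuleCat.of R N)).leftDerived i).obj
          (ModuleCat.of R M)) := by
  induction i with
  | zero =>
    intro N _ _ hfin
    haveI := hfin
    haveI h1 : PreservesColimits ((tensoringLeft (ModuleCat.{u} R)).obj (ModuleCat.of R N)) :=
      (inferInstance : PreservesColimits (tensorLeft (ModuleCat.of R N)))
    haveI : PreservesFiniteColimits ((tensoringLeft (ModuleCat.{u} R)).obj (ModuleCat.of R N)) :=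
      PreservesColimits.preservesFiniteColimits _
    have e := (((tensoringLeft (ModuleCat.{u} R)).obj
      (ModuleCat.of R N)).leftDerivedZeroIsoSelf).app (ModuleCat.of R M)
    exact wl_iso e.symm (wl_tensor (N := N) hM)
  | succ i ih =>
    intro N _ _ hfin
    haveI := hfin
    classical
    obtain ⟨n, f, hf⟩ := Module.Finite.exists_fin' R N
    haveI hKfin : Module.Finite R ↥(LinearMap.ker f) :=
      Module.Finite.iff_fg.mpr (IsNoetherian.noetherian (LinearMap.ker f))
    set C := ModuleCat.{u} R with hC
    let P : ProjectiveResolution (ModuleCat.of R M) :=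
      (HasProjectiveResolution.out (Z := ModuleCat.of R M)).some
    let φ : ModuleCat.of R ↥(LinearMap.ker f) ⟶ ModuleCat.of R (Fin n → R) :=
      ModuleCat.ofHom (LinearMap.ker f).subtype
    let ψ : ModuleCat.of R (Fin n → R) ⟶ ModuleCat.of R N := ModuleCat.ofHom f
    let Φ := (NatTrans.mapHomologicalComplex ((tensoringLeft C).map φ)
      (ComplexShape.down ℕ)).app P.complex
    let Ψ := (NatTrans.mapHomologicalComplex ((tensoringLeft C).map ψ)
      (ComplexShape.down ℕ)).app P.complex
    have hφψ : φ ≫ ψ = 0 := by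
      ext x
      simpa [φ, ψ] using x.2
    have hΦΨ : Φ ≫ Ψ = 0 := by
      have : Φ ≫ Ψ = (NatTrans.mapHomologicalComplex
          ((tensoringLeft C).map φ ≫ (tensoringLeft C).map ψ)
          (ComplexShape.down ℕ)).app P.complex := rfl
      rw [this, ← Functor.map_comp, hφψ]
      ext j x
      simp
      rfl
    set S := ShortComplex.mk Φ Ψ hΦΨ with hSdef
    have hS : S.ShortExact := by
      rw [HomologicalComplex.shortExact_iff_degreewise_shortExact]
      intro j
      haveI hproj : Module.Projective R (P.complex.X j) :=
        (IsProjective.iff_projective (P.complex.X j)).mpr (P.projective j)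
      haveI hflat : Module.Flat R (P.complex.X j) := inferInstance
      have hmono : Mono (S.map (HomologicalComplex.eval C _ j)).f := by
        rw [ModuleCat.mono_iff_injective]
        exact Module.Flat.rTensor_preserves_injective_linearMap (M := P.complex.X j)
          (LinearMap.ker f).subtype (Submodule.injective_subtype _)
      have hepi : Epi (S.map (HomologicalComplex.eval C _ j)).g := by
        rw [ModuleCat.epi_iff_surjective]
        exact LinearMap.rTensor_surjective _ hf
      have hexact : (S.map (HomologicalComplex.eval C _ j)).Exact := by
        rw [ShortComplex.ShortExact.moduleCat_exact_iff_function_exact]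
        exact rTensor_exact (P.complex.X j)
          (LinearMap.exact_subtype_ker_map f) hf
      haveI := hmono
      haveI := hepi
      exact ⟨hexact⟩
    have hrel : (ComplexShape.down ℕ).Rel (i + 1) i := by simp
    have hz : Limits.IsZero (S.X₂.homology (i + 1)) := by
      rw [← HomologicalComplex.exactAt_iff_isZero_homology]
      have hex := P.complex_exactAt_succ i
      rw [HomologicalComplex.exactAt_iff' _ (i + 2) (i + 1) i
        (by simp only [ChainComplex.prev]; omega) (by simp)] at hex ⊢
      rw [ShortComplex.ShortExact.moduleCat_exact_iff_function_exact] at hex ⊢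
      exact Module.Flat.lTensor_exact (Fin n → R) hex
    have h0 : HomologicalComplex.homologyMap S.g (i + 1) = 0 := hz.eq_of_src _ _
    haveI hmonoδ : Mono (hS.δ (i + 1) i hrel) :=
      (hS.homology_exact₃ (i + 1) i hrel).mono_g h0
    have hinjδ : Function.Injective (hS.δ (i + 1) i hrel) :=
      (ModuleCat.mono_iff_injective _).mp hmonoδ
    have e₃ := P.isoLeftDerivedObj ((tensoringLeft C).obj (ModuleCat.of R N)) (i + 1)
    have e₁ := P.isoLeftDerivedObj ((tensoringLeft C).obj
      (ModuleCat.of R ↥(LinearMap.ker f))) i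
    have h1 : IsWeaklyLaskerian R (S.X₁.homology i) :=
      wl_iso e₁ (ih ↥(LinearMap.ker f) hKfin)
    exact wl_of_injective
      ((hS.δ (i + 1) i hrel).hom ∘ₗ
        e₃.toLinearEquiv.toLinearMap)
      (hinjδ.comp e₃.toLinearEquiv.injective) h1

end Cat


theorem isWeaklyLaskerian_tor (R : Type u) [CommRing R] [IsNoetherianRing R]
    (M N : Type u) [AddCommGroup M] [Module R M] [AddCommGroup N] [Module R N]
    (hM : IsWeaklyLaskerian R M) [Module.Finite R N] (i : ℕ) :
    IsWeaklyLaskerian R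
      (((Tor (ModuleCat.{u} R) i).obj (ModuleCat.of R N)).obj (ModuleCat.of R M)) := by
  exact tor_aux hM i N inferInstance
end

section
/- Let R be a commutative Noetherian ring, a an ideal of R, and M an R-module with Supp_R(M) ⊆ V(a). If M is weakly Laskerian, then M is a-weakly cofinite. -/
open CategoryTheory Opposite

universe u

/-- `a`-weakly cofinite: support in `V(a)` and all `Ext^i(R/a, M)` weakly Laskerian. -/
def IsWeaklyCofinite (R : Type u) [CommRing R] (a : Ideal R) (M : ModuleCat.{u} R) : Prop :=
  Module.support R M ⊆ PrimeSpectrum.zeroLocus (a : Set R) ∧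
  ∀ i : ℕ, IsWeaklyLaskerian R
    (((Ext R (ModuleCat.{u} R) i).obj (op (ModuleCat.of R (R ⧸ a)))).obj M)

section WLBasic
variable {R : Type u} [CommRing R]
variable {M M' : Type u} [AddCommGroup M] [Module R M] [AddCommGroup M'] [Module R M']

/-- Associated primes of a module are among those of a submodule and the quotient. -/
lemma associatedPrimes_subset_union (N : Submodule R M) :
    associatedPrimes R M ⊆ associatedPrimes R N ∪ associatedPrimes R (M ⧸ N) := by
  exact associatedPrimes.subset_union_of_exact N.injective_subtype (LinearMap.exact_subtype_mkQ N)

lemma IsWeaklyLaskerian.of_equiv (e : M ≃ₗ[R] M') (hM : IsWeaklyLaskerian R M) :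
    IsWeaklyLaskerian R M' := by
  intro N'
  have e2 : (M ⧸ N'.comap (e : M →ₗ[R] M')) ≃ₗ[R] (M' ⧸ N') :=
    Submodule.Quotient.equiv _ _ e (by
      ext x
      simp only [Submodule.mem_map, Submodule.mem_comap]
      constructor
      · rintro ⟨y, hy, rfl⟩; exact hy
      · intro hx; exact ⟨e.symm x, by simpa using hx, by simp⟩)
  rw [← LinearEquiv.AssociatedPrimes.eq e2]
  exact hM _

lemma IsWeaklyLaskerian.quotient (hM : IsWeaklyLaskerian R M) (N : Submodule R M) :
    IsWeaklyLaskerian R (M ⧸ N) := by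
  intro K
  have h := Submodule.quotientQuotientEquivQuotient N (K.comap N.mkQ)
    (fun x hx => by
      simp only [Submodule.mem_comap, Submodule.mkQ_apply]
      rw [(Submodule.Quotient.mk_eq_zero N).mpr hx]
      exact K.zero_mem)
  have hmap : (K.comap N.mkQ).map N.mkQ = K :=
    Submodule.map_comap_eq_of_surjective N.mkQ_surjective K
  rw [hmap] at h
  rw [LinearEquiv.AssociatedPrimes.eq h]
  exact hM _

lemma IsWeaklyLaskerian.submodule (hM : IsWeaklyLaskerian R M) (N : Submodule R M) :
    IsWeaklyLaskerian R N := by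
  intro K
  have inj : Function.Injective (Submodule.mapQ K (K.map N.subtype) N.subtype
      (fun x hx => Submodule.mem_map_of_mem hx)) := by
    rw [← LinearMap.ker_eq_bot, eq_bot_iff]
    intro x hx
    obtain ⟨x', rfl⟩ := K.mkQ_surjective x
    rw [LinearMap.mem_ker, Submodule.mkQ_apply, Submodule.mapQ_apply,
      Submodule.Quotient.mk_eq_zero] at hx
    obtain ⟨y, hy, hyx⟩ := hx
    rw [Submodule.mem_bot, Submodule.mkQ_apply, Submodule.Quotient.mk_eq_zero]
    rwa [show y = x' from Subtype.ext hyx] at hy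
  have := associatedPrimes.subset_of_injective inj
  exact Set.Finite.subset (hM _) this

lemma IsWeaklyLaskerian.of_extension (N : Submodule R M)
    (h1 : IsWeaklyLaskerian R N) (h2 : IsWeaklyLaskerian R (M ⧸ N)) :
    IsWeaklyLaskerian R M := by
  intro K
  have key := associatedPrimes_subset_union (M := M ⧸ K) (N.map K.mkQ)
  refine Set.Finite.subset (Set.Finite.union ?_ ?_) key
  · -- N.map K.mkQ is the range of N →ₗ M ⧸ K, a quotient of N
    have f : N →ₗ[R] M ⧸ K := K.mkQ.comp N.subtype
    have hrange : LinearMap.range (K.mkQ.comp N.subtype) = N.map K.mkQ := by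
      rw [LinearMap.range_comp, Submodule.range_subtype]
    have e := (LinearMap.quotKerEquivRange (K.mkQ.comp N.subtype))
    rw [hrange] at e
    rw [← LinearEquiv.AssociatedPrimes.eq e]
    exact h1 _
  · have hbot : K.map K.mkQ = ⊥ := by
      rw [eq_bot_iff]
      rintro y ⟨x, hx, rfl⟩
      simpa using (Submodule.Quotient.mk_eq_zero K).mpr hx
    have hm : (K ⊔ N).map K.mkQ = N.map K.mkQ := by
      rw [Submodule.map_sup, hbot, bot_sup_eq]
    have e3 := Submodule.quotientQuotientEquivQuotient K (K ⊔ N) le_sup_left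
    rw [hm] at e3
    have e4 := Submodule.quotientQuotientEquivQuotient N (K ⊔ N) le_sup_right
    rw [LinearEquiv.AssociatedPrimes.eq (e3.trans e4.symm)]
    exact h2 _

lemma IsWeaklyLaskerian.of_injective (f : M' →ₗ[R] M) (hf : Function.Injective f)
    (hM : IsWeaklyLaskerian R M) : IsWeaklyLaskerian R M' :=
  (hM.submodule (LinearMap.range f)).of_equiv (LinearEquiv.ofInjective f hf).symm

lemma IsWeaklyLaskerian.prod (h1 : IsWeaklyLaskerian R M) (h2 : IsWeaklyLaskerian R M') :
    IsWeaklyLaskerian R (M × M') := by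
  apply IsWeaklyLaskerian.of_extension (LinearMap.range (LinearMap.inl R M M'))
  · exact h1.of_equiv (LinearEquiv.ofInjective _ LinearMap.inl_injective)
  · have e := (LinearMap.snd R M M').quotKerEquivOfSurjective
      (fun y => ⟨(0, y), rfl⟩)
    rw [LinearMap.ker_snd] at e
    exact h2.of_equiv e.symm

/-- The linear equivalence `M × (Fin n → M) ≃ (Fin (n+1) → M)` by `Fin.cons`. -/
def finConsLinearEquiv (R : Type u) [CommRing R] (M : Type u) [AddCommGroup M] [Module R M]
    (n : ℕ) : (M × (Fin n → M)) ≃ₗ[R] (Fin (n + 1) → M) where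
  toFun p := Fin.cons p.1 p.2
  invFun f := (f 0, fun i => f i.succ)
  map_add' p q := by funext i; refine Fin.cases ?_ ?_ i <;> simp
  map_smul' c p := by funext i; refine Fin.cases ?_ ?_ i <;> simp
  left_inv p := by simp
  right_inv f := by funext i; refine Fin.cases ?_ ?_ i <;> simp

lemma IsWeaklyLaskerian.pi (hM : IsWeaklyLaskerian R M) (n : ℕ) :
    IsWeaklyLaskerian R (Fin n → M) := by
  induction n with
  | zero =>
    intro N
    have : Subsingleton ((Fin 0 → M) ⧸ N) :=
      (Submodule.mkQ_surjective N).subsingleton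
    rw [associatedPrimes.eq_empty_of_subsingleton]
    exact Set.finite_empty
  | succ n ih =>
    exact (hM.prod ih).of_equiv (finConsLinearEquiv R M n)


end WLBasic

section Resolution
variable {R : Type u} [CommRing R]

/-- A finite free cover step: a module `N` with a surjection from `Fin k → R`. -/
structure FStep (R : Type u) [CommRing R] where
  k : ℕ
  N : Type u
  [acg : AddCommGroup N]
  [mod : Module R N]
  π : (Fin k → R) →ₗ[R] N
  surj : Function.Surjective π

attribute [instance] FStep.acg FStep.mod

noncomputable def mkFStep (R : Type u) [CommRing R] (N : Type u) [AddCommGroup N] [Module R N]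
    [Module.Finite R N] : FStep R where
  k := (Module.Finite.exists_fin' R N).choose
  N := N
  π := (Module.Finite.exists_fin' R N).choose_spec.choose
  surj := (Module.Finite.exists_fin' R N).choose_spec.choose_spec

noncomputable def nextFStep [IsNoetherianRing R] (s : FStep R) : FStep R :=
  haveI : Module.Finite R (LinearMap.ker s.π) :=
    Module.Finite.iff_fg.mpr (IsNoetherian.noetherian _)
  mkFStep R (LinearMap.ker s.π)

variable [IsNoetherianRing R]

noncomputable def fseq (a : Ideal R) : ℕ → FStep R
  | 0 => mkFStep R (R ⧸ a)
  | n + 1 => nextFStep (fseq a n)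

lemma fseq_succ (a : Ideal R) (n : ℕ) :
    fseq a (n + 1) = nextFStep (fseq a n) := rfl

/-- The differential in the finite free resolution. -/
noncomputable def fd (a : Ideal R) (n : ℕ) :
    (Fin (fseq a (n + 1)).k → R) →ₗ[R] (Fin (fseq a n).k → R) :=
  (LinearMap.ker (fseq a n).π).subtype ∘ₗ (fseq a (n + 1)).π

lemma fd_comp (a : Ideal R) (n : ℕ) : (fd a n) ∘ₗ (fd a (n + 1)) = 0 := by
  refine LinearMap.ext fun x => ?_
  have h : (fd a (n + 1)) x ∈ LinearMap.ker (fseq a (n + 1)).π :=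
    ((fseq a (n + 2)).π x).2
  rw [LinearMap.mem_ker] at h
  simp only [LinearMap.comp_apply, LinearMap.zero_apply]
  rw [show (fd a n) ((fd a (n + 1)) x)
      = ((LinearMap.ker (fseq a n).π).subtype) ((fseq a (n + 1)).π ((fd a (n + 1)) x)) from rfl,
    h]
  rfl

noncomputable def fcomplex (a : Ideal R) : ChainComplex (ModuleCat.{u} R) ℕ :=
  ChainComplex.of (fun n => ModuleCat.of R (Fin (fseq a n).k → R))
    (fun n => ModuleCat.ofHom (fd a n))
    (fun n => by
      have := fd_comp a n
      exact ModuleCat.hom_ext this)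

lemma range_fd (a : Ideal R) (n : ℕ) :
    LinearMap.range (fd a n) = LinearMap.ker (fseq a n).π := by
  ext y
  constructor
  · rintro ⟨x, rfl⟩
    exact ((fseq a (n + 1)).π x).2
  · intro hy
    obtain ⟨x, hx⟩ := (fseq a (n + 1)).surj (⟨y, hy⟩ : LinearMap.ker (fseq a n).π)
    exact ⟨x, congrArg Subtype.val hx⟩

lemma ker_fd (a : Ideal R) (n : ℕ) :
    LinearMap.ker (fd a n) = LinearMap.ker (fseq a (n + 1)).π := by
  ext x
  rw [LinearMap.mem_ker, LinearMap.mem_ker]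
  exact ⟨fun h => Subtype.ext h, fun h => congrArg Subtype.val h⟩

instance (a : Ideal R) (n : ℕ) : Projective ((fcomplex a).X n) :=
  ModuleCat.projective_of_free (M := ModuleCat.of R (Fin (fseq a n).k → R))
    (Pi.basisFun R (Fin (fseq a n).k))

lemma fcomplex_exactAt_succ (a : Ideal R) (n : ℕ) :
    (fcomplex a).ExactAt (n + 1) := by
  rw [HomologicalComplex.exactAt_iff' _ (n + 1 + 1) (n + 1) n (by simp) (by simp)]
  rw [ShortComplex.moduleCat_exact_iff]
  intro x hx
  have hd : (fcomplex a).d (n + 1) n = ModuleCat.ofHom (fd a n) := ChainComplex.of_d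
    (fun n => ModuleCat.of R (Fin (fseq a n).k → R)) (fun n => ModuleCat.ofHom (fd a n)) n
  have hd2 : (fcomplex a).d (n + 1 + 1) (n + 1) = ModuleCat.ofHom (fd a (n + 1)) :=
    ChainComplex.of_d (fun n => ModuleCat.of R (Fin (fseq a n).k → R)) (fun n => ModuleCat.ofHom (fd a n)) (n + 1)
  dsimp [HomologicalComplex.sc', HomologicalComplex.shortComplexFunctor'] at hx ⊢
  rw [hd] at hx
  rw [hd2]
  have : x ∈ LinearMap.ker (fd a n) := (LinearMap.mem_ker (f := fd a n)).mpr hx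
  rw [ker_fd] at this
  rw [← range_fd] at this
  exact this

noncomputable def fπ (a : Ideal R) : (fcomplex a).X 0 ⟶ ModuleCat.of R (R ⧸ a) :=
  ModuleCat.ofHom (fseq a 0).π

lemma fd_fπ (a : Ideal R) : (fcomplex a).d 1 0 ≫ fπ a = 0 := by
  have hd : (fcomplex a).d 1 0 = ModuleCat.ofHom (fd a 0) := ChainComplex.of_d
    (fun n => ModuleCat.of R (Fin (fseq a n).k → R)) (fun n => ModuleCat.ofHom (fd a n)) 0
  rw [hd]
  refine ModuleCat.hom_ext (LinearMap.ext fun x => ?_)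
  have h : (fd a 0) x ∈ LinearMap.ker (fseq a 0).π := ((fseq a 1).π x).2
  rw [LinearMap.mem_ker] at h
  exact h

/-- A projective resolution of `R ⧸ a` by finite free modules. -/
noncomputable def fres (a : Ideal R) : ProjectiveResolution (ModuleCat.of R (R ⧸ a)) where
  complex := fcomplex a
  π := (ChainComplex.toSingle₀Equiv _ _).symm ⟨fπ a, fd_fπ a⟩
  quasiIso := ⟨fun n => by
    cases n with
    | zero =>
      have hex : (ShortComplex.mk ((fcomplex a).d 1 0) (fπ a) (fd_fπ a)).Exact := by
        rw [ShortComplex.moduleCat_exact_iff]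
        intro x hx
        have hx' : x ∈ LinearMap.ker (fseq a 0).π := (LinearMap.mem_ker (f := (fseq a 0).π)).mpr hx
        rw [← range_fd] at hx'
        obtain ⟨y, hy⟩ := hx'
        refine ⟨y, ?_⟩
        have hd : (fcomplex a).d 1 0 = ModuleCat.ofHom (fd a 0) := ChainComplex.of_d
          (fun n => ModuleCat.of R (Fin (fseq a n).k → R)) (fun n => ModuleCat.ofHom (fd a n)) 0
        show ((fcomplex a).d 1 0) y = x
        rw [hd]
        exact hy
      have hepi : Epi (ShortComplex.mk ((fcomplex a).d 1 0) (fπ a) (fd_fπ a)).g :=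
        (ModuleCat.epi_iff_surjective (fπ a)).mpr (by intro y; exact (fseq a 0).surj y)
      rw [ChainComplex.quasiIsoAt₀_iff, ShortComplex.quasiIso_iff_of_zeros']
      · refine (ShortComplex.exact_and_epi_g_iff_of_iso ?_).2 ⟨hex, hepi⟩
        exact ShortComplex.isoMk (Iso.refl _) (Iso.refl _) (Iso.refl _)
          (by exact (Category.id_comp _).trans (Category.comp_id _).symm)
          (by exact (Category.id_comp _).trans (Category.comp_id _).symm)
      all_goals rfl
    | succ n =>
      rw [quasiIsoAt_iff_exactAt']
      · exact fcomplex_exactAt_succ a n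
      · apply ChainComplex.exactAt_succ_single_obj⟩



end Resolution

section Final
variable {R : Type u} [CommRing R] [IsNoetherianRing R]
variable {M : Type u} [AddCommGroup M] [Module R M]

lemma isWeaklyLaskerian_ext (a : Ideal R) (hM : IsWeaklyLaskerian R M) (i : ℕ) :
    IsWeaklyLaskerian R
      (((Ext R (ModuleCat.{u} R) i).obj (op (ModuleCat.of R (R ⧸ a)))).obj (ModuleCat.of R M)) := by
  classical
  let P := fres a
  let K := P.complex.linearYonedaObj R (ModuleCat.of R M)
  have e1 : ((Ext R (ModuleCat.{u} R) i).obj (op (ModuleCat.of R (R ⧸ a)))).obj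
      (ModuleCat.of R M) ≅ K.homology i := P.isoExt i (ModuleCat.of R M)
  have e2 : K.homology i ≅ (K.sc i).moduleCatLeftHomologyData.H := (K.sc i).moduleCatHomologyIso
  have e : ((Ext R (ModuleCat.{u} R) i).obj (op (ModuleCat.of R (R ⧸ a)))).obj
      (ModuleCat.of R M) ≃ₗ[R] (K.sc i).moduleCatLeftHomologyData.H := (e1 ≪≫ e2).toLinearEquiv
  have wlV : IsWeaklyLaskerian R ((K.sc i).X₂) := by
    have equiv : (Fin (fseq a i).k → M) ≃ₗ[R] ((K.sc i).X₂) :=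
      ((Pi.basisFun R (Fin (fseq a i).k)).constr R).trans (ModuleCat.homLinearEquiv (M := ModuleCat.of R (Fin (fseq a i).k → R))
        (N := ModuleCat.of R M) (S := R)).symm
    exact (hM.pi _).of_equiv equiv
  have wlH : IsWeaklyLaskerian R ((K.sc i).moduleCatLeftHomologyData.H) :=
    (wlV.submodule (LinearMap.ker (K.sc i).g.hom)).quotient
      (LinearMap.range (K.sc i).moduleCatToCycles)
  exact wlH.of_equiv e.symm

end Final

theorem isWeaklyCofinite_of_isWeaklyLaskerian (R : Type u) [CommRing R] [IsNoetherianRing R]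
    (a : Ideal R) (M : Type u) [AddCommGroup M] [Module R M]
    (hsupp : Module.support R M ⊆ PrimeSpectrum.zeroLocus (a : Set R))
    (hM : IsWeaklyLaskerian R M) :
    IsWeaklyCofinite R a (ModuleCat.of R M) :=
  ⟨hsupp, fun i => isWeaklyLaskerian_ext a hM i⟩
end
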